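/- Let G = (V, E) be a finite connected weighted graph with nonnegative edge weights w, let T ⊆ V with |T| ≥ 2, and let s, d ∈ T. Let OPT denote the minimum total weight of a walk in G from s to d that visits every vertex of T at least once, and let M denote the minimum total weight of a spanning tree of the metric completion of T. Then M ≤ OPT, and there exists a walk in G from s to d visiting every vertex of T whose total weight is at most 2 · M; consequently there exists such a walk of total weight at most 2 · OPT. -/

import Mathlib

open SimpleGraph

/-- A spanning tree of `G` is a subgraph of `G` (on the same vertex set) that is a tree. -/
def IsSpanningTree {V : Type*} (G H : SimpleGraph V) : Prop :=
  H ≤ G ∧ H.IsTree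

/-- The total weight of (the edges of) a graph `H` with edge-weight function `w`. -/
noncomputable def treeWeight {V : Type*} [Finite V] (H : SimpleGraph V)
    (w : Sym2 V → ℝ) : ℝ :=
  ∑ e ∈ (Set.toFinite H.edgeSet).toFinset, w e

/-- `H` is a minimum spanning tree of the weighted graph `(G, w)`. -/
def IsMST {V : Type*} [Finite V] (G : SimpleGraph V) (w : Sym2 V → ℝ)
    (H : SimpleGraph V) : Prop :=
  IsSpanningTree G H ∧ ∀ H', IsSpanningTree G H' → treeWeight H w ≤ treeWeight H' w

/-- Weighted graph distance: the minimum (infimum) total weight of a walk from `u` to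
`v` in `G`. -/
noncomputable def wdist {V : Type*} (G : SimpleGraph V) (w : Sym2 V → ℝ) (u v : V) : ℝ :=
  sInf {x | ∃ p : G.Walk u v, x = (p.edges.map w).sum}

/-! ### Auxiliary list lemmas -/

lemma list_map_sum_nonneg {α : Type*} (l : List α) (f : α → ℝ) (hf : ∀ a, 0 ≤ f a) :
    0 ≤ (l.map f).sum :=
  List.sum_nonneg (by rintro x hx; obtain ⟨a, -, rfl⟩ := List.mem_map.1 hx; exact hf a)

lemma finset_sum_le_list_sum {α : Type*} [DecidableEq α] (l : List α) (f : α → ℝ)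
    (hf : ∀ a, 0 ≤ f a) : ∑ a ∈ l.toFinset, f a ≤ (l.map f).sum := by
  induction l with
  | nil => simp
  | cons a l ih =>
    rw [List.toFinset_cons, List.map_cons, List.sum_cons]
    by_cases h : a ∈ l.toFinset
    · rw [Finset.insert_eq_self.2 h]; have := hf a; linarith
    · rw [Finset.sum_insert h]; linarith

lemma nodup_subset_sum_le {α : Type*} [DecidableEq α] {l₁ l₂ : List α} (h : l₁ ⊆ l₂)
    (hn : l₁.Nodup) (f : α → ℝ) (hf : ∀ a, 0 ≤ f a) :
    (l₁.map f).sum ≤ (l₂.map f).sum := by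
  rw [← List.sum_toFinset _ hn]
  calc ∑ a ∈ l₁.toFinset, f a ≤ ∑ a ∈ l₂.toFinset, f a := by
        apply Finset.sum_le_sum_of_subset_of_nonneg
        · intro x hx; rw [List.mem_toFinset] at *; exact h hx
        · intro x _ _; exact hf x
    _ ≤ (l₂.map f).sum := finset_sum_le_list_sum l₂ f hf

lemma pmap_val_map {β : Type*} {P : β → Prop} :
    ∀ (l : List β) (h : ∀ a ∈ l, P a),
      (l.pmap (fun a ha => (⟨a, ha⟩ : Subtype P)) h).map Subtype.val = l := by
  intro l h
  induction l with
  | nil => rfl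
  | cons a l ih => simp [List.pmap, ih]

/-! ### Basic properties of `wdist` -/

section WDist
variable {V : Type*} {G : SimpleGraph V} {w : Sym2 V → ℝ}

lemma wdist_le (hw : ∀ e, 0 ≤ w e) {u v : V} (p : G.Walk u v) :
    wdist G w u v ≤ (p.edges.map w).sum :=
  csInf_le ⟨0, by rintro x ⟨q, rfl⟩; exact list_map_sum_nonneg _ _ hw⟩ ⟨p, rfl⟩

lemma wdist_nonneg (hw : ∀ e, 0 ≤ w e) {u v : V} (h : G.Reachable u v) :
    0 ≤ wdist G w u v :=
  le_csInf ⟨_, h.some, rfl⟩ (by rintro x ⟨q, rfl⟩; exact list_map_sum_nonneg _ _ hw)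

lemma wdist_self (hw : ∀ e, 0 ≤ w e) (u : V) : wdist G w u u = 0 :=
  le_antisymm (by simpa using wdist_le hw (Walk.nil : G.Walk u u))
    (wdist_nonneg hw (Reachable.refl u))

lemma exists_walk_wdist [Fintype V] (hw : ∀ e, 0 ≤ w e) {u v : V} (h : G.Reachable u v) :
    ∃ p : G.Walk u v, (p.edges.map w).sum = wdist G w u v := by
  classical
  have hne : (Finset.univ : Finset (G.Path u v)).Nonempty :=
    ⟨h.some.toPath, Finset.mem_univ _⟩
  obtain ⟨p0, -, hp0⟩ := Finset.exists_min_image Finset.univ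
    (fun p : G.Path u v => ((p : G.Walk u v).edges.map w).sum) hne
  refine ⟨p0, le_antisymm ?_ (wdist_le hw _)⟩
  refine le_csInf ⟨_, h.some, rfl⟩ ?_
  rintro x ⟨q, rfl⟩
  calc ((p0 : G.Walk u v).edges.map w).sum ≤ (q.toPath.1.edges.map w).sum :=
        hp0 q.toPath (Finset.mem_univ _)
    _ ≤ (q.edges.map w).sum :=
        nodup_subset_sum_le (q.edges_bypass_subset) (q.bypass_isPath.isTrail.edges_nodup) w hw

lemma wdist_triangle_adj [Fintype V] (hw : ∀ e, 0 ≤ w e) {u u' t : V} (h : G.Adj u u')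
    (hr : G.Reachable u' t) : wdist G w u t ≤ w s(u, u') + wdist G w u' t := by
  obtain ⟨p, hp⟩ := exists_walk_wdist hw hr
  have h2 := wdist_le hw (Walk.cons h p)
  rw [Walk.edges_cons, List.map_cons, List.sum_cons, hp] at h2
  exact h2

end WDist

/-! ### Sums of distances along a list of vertices -/

noncomputable def dsum {V : Type*} (G : SimpleGraph V) (w : Sym2 V → ℝ) : List V → ℝ
  | a :: b :: l => wdist G w a b + dsum G w (b :: l)
  | _ => 0

section DSum
variable {V : Type*} [Fintype V] {G : SimpleGraph V} {w : Sym2 V → ℝ}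

lemma dsum_cons_le_walk (hw : ∀ e, 0 ≤ w e) (hG : G.Connected) :
    ∀ {u v : V} (q : G.Walk u v) (t : V) (L : List V), (t :: L).Sublist q.support →
      wdist G w u t + dsum G w (t :: L) ≤ (q.edges.map w).sum := by
  intro u v q
  induction q with
  | nil =>
    intro t L h
    rw [Walk.support_nil] at h
    cases h with
    | cons _ h' => exact absurd (List.eq_nil_of_sublist_nil h') (by simp)
    | cons_cons _ h' =>
      rw [List.eq_nil_of_sublist_nil h']
      simp [dsum, wdist_self hw]
  | cons hadj q ih =>
    rename_i u b v
    intro t L h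
    rw [Walk.support_cons] at h
    rw [Walk.edges_cons, List.map_cons, List.sum_cons]
    cases h with
    | cons _ h' =>
      have h1 := ih t L h'
      have h2 := wdist_triangle_adj hw hadj (hG.preconnected b t)
      linarith
    | cons_cons _ h' =>
      rw [wdist_self hw]
      cases L with
      | nil =>
        have h1 := list_map_sum_nonneg q.edges w hw
        have h2 := hw s(u, b)
        simp only [dsum]
        linarith
      | cons t' L' =>
        have h1 := ih t' L' h'
        have h2 := wdist_triangle_adj hw hadj (hG.preconnected b t')
        simp only [dsum]
        linarith

end DSum

/-! ### Existence of spanning trees of connected graphs -/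

lemma connected_sdiff_of_reachable {α : Type*} {K : SimpleGraph α} (hK : K.Connected)
    {u v : α} (hr : (K \ fromEdgeSet {s(u, v)}).Reachable u v) :
    (K \ fromEdgeSet {s(u, v)}).Connected := by
  rw [connected_iff]
  refine ⟨?_, hK.nonempty⟩
  intro x y
  obtain ⟨p⟩ := hK.preconnected x y
  induction p with
  | nil => exact Reachable.refl _
  | cons hadj q ih =>
    rename_i a b c
    refine Reachable.trans ?_ ih
    by_cases he : s(a, b) = s(u, v)
    · rcases Sym2.eq_iff.1 he with ⟨rfl, rfl⟩ | ⟨rfl, rfl⟩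
      · exact hr
      · exact hr.symm
    · refine Adj.reachable ?_
      rw [sdiff_adj]
      exact ⟨hadj, by simp [fromEdgeSet_adj, he]⟩

lemma exists_tree_le {α : Type*} [Finite α] :
    ∀ (n : ℕ) (K : SimpleGraph α), K.edgeSet.ncard ≤ n → K.Connected →
      ∃ H', H' ≤ K ∧ H'.IsTree := by
  intro n
  induction n with
  | zero =>
    intro K hcard hK
    by_cases hac : K.IsAcyclic
    · exact ⟨K, le_rfl, ⟨hK, hac⟩⟩
    · exfalso
      rw [isAcyclic_iff_forall_edge_isBridge] at hac
      push_neg at hac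
      obtain ⟨e, he, -⟩ := hac
      have h0 : K.edgeSet = ∅ := (Set.ncard_eq_zero (Set.toFinite _)).1 (Nat.le_zero.1 hcard)
      exact absurd (h0 ▸ he) (Set.notMem_empty e)
  | succ n ih =>
    intro K hcard hK
    by_cases hac : K.IsAcyclic
    · exact ⟨K, le_rfl, ⟨hK, hac⟩⟩
    · rw [isAcyclic_iff_forall_edge_isBridge] at hac
      push_neg at hac
      obtain ⟨e, he, hb⟩ := hac
      induction e using Sym2.ind with
      | _ u v =>
      have hadj : K.Adj u v := he
      have hr : (K \ fromEdgeSet {s(u, v)}).Reachable u v := by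
        rw [isBridge_iff] at hb
        push_neg at hb
        exact hb
      have hconn := connected_sdiff_of_reachable hK hr
      have hsub : (K \ fromEdgeSet {s(u, v)}).edgeSet ⊂ K.edgeSet := by
        constructor
        · rw [edgeSet_sdiff]; exact Set.diff_subset
        · intro hss
          have h1 : s(u, v) ∈ (K \ fromEdgeSet {s(u, v)}).edgeSet := hss he
          rw [mem_edgeSet, sdiff_adj] at h1
          exact h1.2 (by rw [fromEdgeSet_adj]; exact ⟨rfl, hadj.ne⟩)
      have hlt : (K \ fromEdgeSet {s(u, v)}).edgeSet.ncard < K.edgeSet.ncard :=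
        Set.ncard_lt_ncard hsub (Set.toFinite _)
      obtain ⟨H', hle, ht⟩ := ih (K \ fromEdgeSet {s(u, v)}) (by omega) hconn
      exact ⟨H', hle.trans sdiff_le, ht⟩

/-! ### Spanning walks with every edge used at most twice -/

lemma exists_adj_crossing {α : Type*} {K : SimpleGraph α} {S : α → Prop} :
    ∀ {a x : α} (_ : K.Walk a x), S a → ¬S x → ∃ u y, K.Adj u y ∧ S u ∧ ¬S y := by
  intro a x q
  induction q with
  | nil => intro h1 h2; exact absurd h1 h2
  | cons hadj q ih =>
    rename_i a b c
    intro h1 h2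
    by_cases hb : S b
    · exact ih hb h2
    · exact ⟨a, b, hadj, h1, hb⟩

lemma exists_spanning_walk_count_le_two {α : Type*} [Fintype α] [DecidableEq α]
    {K : SimpleGraph α} (hK : K.Connected) (s d : α) :
    ∃ p : K.Walk s d, (∀ v, v ∈ p.support) ∧ ∀ e, p.edges.count e ≤ 2 := by
  classical
  suffices h : ∀ n (p : K.Walk s d), (∀ e, p.edges.count e ≤ 2) →
      (Finset.univ.filter (· ∉ p.support)).card ≤ n →
      ∃ p' : K.Walk s d, (∀ v, v ∈ p'.support) ∧ ∀ e, p'.edges.count e ≤ 2 by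
    obtain ⟨p0⟩ := hK.preconnected s d
    refine h (Finset.univ.filter (· ∉ p0.bypass.support)).card p0.bypass ?_ le_rfl
    intro e
    exact le_trans (List.nodup_iff_count_le_one.1 p0.bypass_isPath.isTrail.edges_nodup e)
      one_le_two
  intro n
  induction n with
  | zero =>
    intro p hc hcard
    refine ⟨p, fun v => ?_, hc⟩
    by_contra hv
    have hmem : v ∈ Finset.univ.filter (· ∉ p.support) := by simp [hv]
    have := Finset.card_pos.2 ⟨v, hmem⟩
    omega
  | succ n ih =>
    intro p hc hcard
    by_cases hall : ∀ v, v ∈ p.support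
    · exact ⟨p, hall, hc⟩
    push_neg at hall
    obtain ⟨x, hx⟩ := hall
    obtain ⟨q⟩ := hK.preconnected s x
    obtain ⟨u, y, hadj, hu, hy⟩ :=
      exists_adj_crossing (S := (· ∈ p.support)) q p.start_mem_support hx
    set p' : K.Walk s d := (p.takeUntil u hu).append
      (Walk.cons hadj (Walk.cons hadj.symm (p.dropUntil u hu))) with hp'
    have hsupp : ∀ v ∈ p.support, v ∈ p'.support := by
      intro v hv
      conv at hv => rw [← p.take_spec hu]
      rw [Walk.mem_support_append_iff] at hv
      rw [hp', Walk.mem_support_append_iff]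
      rcases hv with hv | hv
      · exact Or.inl hv
      · exact Or.inr (by simp [Walk.support_cons, hv])
    have hysupp : y ∈ p'.support := by
      rw [hp', Walk.mem_support_append_iff]
      exact Or.inr (by simp [Walk.support_cons])
    have hedges : p'.edges = (p.takeUntil u hu).edges ++
        s(u, y) :: s(u, y) :: (p.dropUntil u hu).edges := by
      rw [hp', Walk.edges_append, Walk.edges_cons, Walk.edges_cons, Sym2.eq_swap]
    have hpedges : p.edges = (p.takeUntil u hu).edges ++ (p.dropUntil u hu).edges := by
      conv_lhs => rw [← p.take_spec hu]
      rw [Walk.edges_append]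
    have hc' : ∀ e, p'.edges.count e ≤ 2 := by
      intro e
      have hcp := hc e
      rw [hpedges, List.count_append] at hcp
      by_cases he : e = s(u, y)
      · subst he
        have h0 : s(u, y) ∉ p.edges := fun hmem => hy (p.snd_mem_support_of_mem_edges hmem)
        rw [hpedges, List.mem_append] at h0
        push_neg at h0
        rw [hedges, List.count_append, List.count_eq_zero_of_not_mem h0.1,
          List.count_cons_self, List.count_cons_self, List.count_eq_zero_of_not_mem h0.2]
      · rw [hedges, List.count_append, List.count_cons_of_ne (Ne.symm he), List.count_cons_of_ne (Ne.symm he)]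
        omega
    have hcard' : (Finset.univ.filter (· ∉ p'.support)).card ≤ n := by
      have hss : Finset.univ.filter (· ∉ p'.support) ⊂ Finset.univ.filter (· ∉ p.support) := by
        constructor
        · intro v hv
          simp only [Finset.mem_filter] at *
          exact ⟨hv.1, fun hvp => hv.2 (hsupp v hvp)⟩
        · intro hsub
          have hymem : y ∈ Finset.univ.filter (· ∉ p.support) := by simp [hy]
          have := hsub hymem
          simp only [Finset.mem_filter] at this
          exact this.2 hysupp
      have := Finset.card_lt_card hss
      omega
    exact ih p' hc' hcard'

/-! ### Lifting walks from the metric completion to `G` -/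

lemma lift_walk {V : Type*} [Fintype V] {G : SimpleGraph V} {w : Sym2 V → ℝ}
    (hw : ∀ e, 0 ≤ w e) (hG : G.Connected) {T : Set V} {wN : Sym2 ↥T → ℝ}
    (hwN : ∀ a b : ↥T, wN s(a, b) = wdist G w ↑a ↑b) {H : SimpleGraph ↥T} :
    ∀ {a b : ↥T} (p : H.Walk a b), ∃ q : G.Walk ↑a ↑b,
      (q.edges.map w).sum ≤ (p.edges.map wN).sum ∧ ∀ v ∈ p.support, ↑v ∈ q.support := by
  intro a b p
  induction p with
  | nil => exact ⟨Walk.nil, by simp, by simp⟩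
  | cons hadj p ih =>
    rename_i a c b
    obtain ⟨q', hq', hs'⟩ := ih
    obtain ⟨r, hr⟩ := exists_walk_wdist hw (hG.preconnected (↑a) (↑c))
    refine ⟨r.append q', ?_, ?_⟩
    · rw [Walk.edges_append, List.map_append, List.sum_append, Walk.edges_cons,
        List.map_cons, List.sum_cons, hwN, hr]
      linarith
    · intro v hv
      rw [Walk.support_cons, List.mem_cons] at hv
      rw [Walk.mem_support_append_iff]
      rcases hv with rfl | hv
      · exact Or.inl r.start_mem_support
      · exact Or.inr (hs' v hv)

/-! ### The chain graph on a list of vertices -/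

def elist {β : Type*} : List β → List (Sym2 β)
  | a :: b :: l => s(a, b) :: elist (b :: l)
  | _ => []

lemma elist_map_sum {V : Type*} {G : SimpleGraph V} {w : Sym2 V → ℝ} {T : Set V}
    {wN : Sym2 ↥T → ℝ} (hwN : ∀ a b : ↥T, wN s(a, b) = wdist G w ↑a ↑b) :
    ∀ L : List ↥T, ((elist L).map wN).sum = dsum G w (L.map Subtype.val) := by
  intro L
  induction L with
  | nil => simp [elist, dsum]
  | cons a L ih =>
    cases L with
    | nil => simp [elist, dsum]
    | cons b l =>
      simp only [elist, List.map_cons, List.sum_cons, dsum]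
      rw [hwN, ih, List.map_cons]

lemma chain_reach_head {β : Type*} :
    ∀ (l : List β) (x : β), (x :: l).Nodup → ∀ b ∈ x :: l,
      (fromEdgeSet {e | e ∈ elist (x :: l)}).Reachable x b := by
  intro l
  induction l with
  | nil =>
    intro x _ b hb
    rw [List.mem_singleton] at hb
    subst hb; exact Reachable.refl _
  | cons y l ih =>
    intro x hnd b hb
    rcases List.mem_cons.1 hb with rfl | hb'
    · exact Reachable.refl _
    · have hxy : (fromEdgeSet {e | e ∈ elist (x :: y :: l)}).Adj x y := by
        rw [fromEdgeSet_adj]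
        refine ⟨by simp [elist], ?_⟩
        intro h
        exact (List.nodup_cons.1 hnd).1 (h ▸ List.mem_cons_self)
      have hr := ih y (List.nodup_cons.1 hnd).2 b hb'
      have hmono : fromEdgeSet {e | e ∈ elist (y :: l)} ≤
          fromEdgeSet {e | e ∈ elist (x :: y :: l)} := by
        apply fromEdgeSet_mono
        intro e he
        simp only [Set.mem_setOf_eq, elist] at *
        exact List.mem_cons_of_mem _ he
      exact hxy.reachable.trans (hr.mono hmono)

lemma treeWeight_mono {β : Type*} [Finite β] {H₁ H₂ : SimpleGraph β} (h : H₁ ≤ H₂)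
    {f : Sym2 β → ℝ} (hf : ∀ e, 0 ≤ f e) : treeWeight H₁ f ≤ treeWeight H₂ f := by
  apply Finset.sum_le_sum_of_subset_of_nonneg
  · intro e he
    rw [Set.Finite.mem_toFinset] at *
    exact edgeSet_mono h he
  · exact fun e _ _ => hf e

/-- 2-approximation guarantee for Multi-Goal Path Finding.  Let `G` be a finite
connected graph with nonnegative weights, `T` a set of terminals with `|T| ≥ 2` and
`s, d ∈ T`, let `OPT` be the minimum total weight of a walk from `s` to `d` visiting
every vertex of `T`, and let `H` be a minimum spanning tree of the metric completion of
`T` (so `treeWeight H wN = M`).  Then `M ≤ OPT`, some walk from `s` to `d` visiting all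
of `T` has total weight at most `2 * M`, and consequently some such walk has total
weight at most `2 * OPT`. -/
theorem mgpf_two_approximation {V : Type*} [Fintype V]
    (G : SimpleGraph V) (w : Sym2 V → ℝ)
    (hG : G.Connected) (hw : ∀ e, 0 ≤ w e)
    (T : Set V) (hT : 2 ≤ T.ncard)
    (s d : V) (hs : s ∈ T) (hd : d ∈ T)
    (wN : Sym2 ↥T → ℝ) (hwN : ∀ a b : ↥T, wN s(a, b) = wdist G w ↑a ↑b)
    (H : SimpleGraph ↥T) (hH : IsMST (⊤ : SimpleGraph ↥T) wN H) :
    treeWeight H wN ≤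
      sInf {x | ∃ q : G.Walk s d, (∀ t ∈ T, t ∈ q.support) ∧ x = (q.edges.map w).sum} ∧
    (∃ p : G.Walk s d, (∀ t ∈ T, t ∈ p.support) ∧
      (p.edges.map w).sum ≤ 2 * treeWeight H wN) ∧
    (∃ p : G.Walk s d, (∀ t ∈ T, t ∈ p.support) ∧
      (p.edges.map w).sum ≤
        2 * sInf {x | ∃ q : G.Walk s d, (∀ t ∈ T, t ∈ q.support) ∧
              x = (q.edges.map w).sum}) := by
  classical
  haveI : Fintype ↥T := Fintype.ofFinite _
  have hwN0 : ∀ e, 0 ≤ wN e := by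
    intro e
    induction e using Sym2.ind with
    | _ a b => rw [hwN]; exact wdist_nonneg hw (hG.preconnected _ _)
  -- A spanning walk of the MST using each edge at most twice
  obtain ⟨p, hp_supp, hp_cnt⟩ :=
    exists_spanning_walk_count_le_two hH.1.2.isConnected (⟨s, hs⟩ : ↥T) ⟨d, hd⟩
  have hpw : (p.edges.map wN).sum ≤ 2 * treeWeight H wN := by
    rw [Finset.sum_list_map_count]
    calc ∑ e ∈ p.edges.toFinset, p.edges.count e • wN e
        ≤ ∑ e ∈ p.edges.toFinset, 2 * wN e := by
          refine Finset.sum_le_sum fun e he => ?_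
          rw [nsmul_eq_mul]
          exact mul_le_mul_of_nonneg_right (by exact_mod_cast hp_cnt e) (hwN0 e)
      _ ≤ ∑ e ∈ (Set.toFinite H.edgeSet).toFinset, 2 * wN e := by
          apply Finset.sum_le_sum_of_subset_of_nonneg
          · intro e he
            rw [List.mem_toFinset] at he
            rw [Set.Finite.mem_toFinset]
            exact p.edges_subset_edgeSet he
          · intro e _ _
            exact mul_nonneg (by norm_num) (hwN0 e)
      _ = 2 * treeWeight H wN := by rw [treeWeight, ← Finset.mul_sum]
  obtain ⟨q2, hq2w, hq2s⟩ := lift_walk hw hG hwN p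
  have hq2_visits : ∀ t ∈ T, t ∈ q2.support := fun t ht => hq2s ⟨t, ht⟩ (hp_supp ⟨t, ht⟩)
  have part2 : ∃ q : G.Walk s d, (∀ t ∈ T, t ∈ q.support) ∧
      (q.edges.map w).sum ≤ 2 * treeWeight H wN :=
    ⟨q2, hq2_visits, le_trans hq2w hpw⟩
  -- Lower bound : the MST weight is at most any feasible walk weight
  have part1 : treeWeight H wN ≤
      sInf {x | ∃ q : G.Walk s d, (∀ t ∈ T, t ∈ q.support) ∧ x = (q.edges.map w).sum} := by
    refine le_csInf ⟨_, q2, hq2_visits, rfl⟩ ?_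
    rintro x ⟨q, hqT, rfl⟩
    set L0 := (q.support.filter (· ∈ T)).dedup with hL0
    have hL0nd : L0.Nodup := List.nodup_dedup _
    have hL0sub : L0.Sublist q.support :=
      (List.dedup_sublist _).trans List.filter_sublist
    have hL0mem : ∀ z, z ∈ L0 ↔ z ∈ q.support ∧ z ∈ T := by
      intro z
      rw [hL0, List.mem_dedup, List.mem_filter]
      simp
    have hL0h : ∀ z ∈ L0, z ∈ T := fun z hz => ((hL0mem z).1 hz).2
    set L : List ↥T := L0.pmap (fun z hz => (⟨z, hz⟩ : ↥T)) hL0h with hL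
    have hLval : L.map Subtype.val = L0 := pmap_val_map L0 hL0h
    have hLnd : L.Nodup := by
      have := hLval ▸ hL0nd
      exact this.of_map _
    have hLall : ∀ t : ↥T, t ∈ L := by
      rintro ⟨z, hz⟩
      have hzL0 : z ∈ L0 := (hL0mem z).2 ⟨hqT z hz, hz⟩
      rw [hL, List.mem_pmap]
      exact ⟨z, hzL0, rfl⟩
    obtain ⟨xh, l, hxl⟩ : ∃ xh l, L = xh :: l := by
      cases hc : L with
      | nil => exact absurd (hc ▸ hLall ⟨s, hs⟩) (by simp)
      | cons xh l => exact ⟨xh, l, rfl⟩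
    set P : SimpleGraph ↥T := fromEdgeSet {e | e ∈ elist L} with hP
    have hPconn : P.Connected := by
      rw [connected_iff]
      refine ⟨?_, ⟨⟨s, hs⟩⟩⟩
      intro a b
      have ha := chain_reach_head l xh (hxl ▸ hLnd) a (hxl ▸ hLall a)
      have hb := chain_reach_head l xh (hxl ▸ hLnd) b (hxl ▸ hLall b)
      rw [hP, hxl]
      exact ha.symm.trans hb
    obtain ⟨H'', hle'', htree''⟩ := exists_tree_le P.edgeSet.ncard P le_rfl hPconn
    have hMle : treeWeight H wN ≤ treeWeight H'' wN := hH.2 H'' ⟨le_top, htree''⟩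
    have h1 : treeWeight H'' wN ≤ treeWeight P wN := treeWeight_mono hle'' hwN0
    have h2 : treeWeight P wN ≤ ((elist L).map wN).sum := by
      have hsubE : (Set.toFinite P.edgeSet).toFinset ⊆ (elist L).toFinset := by
        intro e he
        rw [Set.Finite.mem_toFinset] at he
        rw [List.mem_toFinset]
        rw [hP, edgeSet_fromEdgeSet] at he
        exact he.1
      calc treeWeight P wN ≤ ∑ e ∈ (elist L).toFinset, wN e :=
            Finset.sum_le_sum_of_subset_of_nonneg hsubE (fun e _ _ => hwN0 e)
        _ ≤ ((elist L).map wN).sum := finset_sum_le_list_sum _ _ hwN0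
    have h3 : ((elist L).map wN).sum = dsum G w L0 := by
      rw [elist_map_sum hwN L, hLval]
    have h4 : dsum G w L0 ≤ (q.edges.map w).sum := by
      have hL0form : L0 = (↑xh : V) :: l.map Subtype.val := by
        rw [← hLval, hxl, List.map_cons]
      have hsub2 : ((↑xh : V) :: l.map Subtype.val).Sublist q.support := hL0form ▸ hL0sub
      have hkey := dsum_cons_le_walk hw hG q (↑xh) (l.map Subtype.val) hsub2
      have hnn := wdist_nonneg hw (hG.preconnected s (↑xh))
      rw [hL0form]
      linarith
    linarith
  refine ⟨part1, part2, ?_⟩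
  obtain ⟨q, hqv, hqw⟩ := part2
  exact ⟨q, hqv, le_trans hqw (by linarith)⟩
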